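/- Let D be a digraph on a finite vertex type V and let k ≥ 2. Then D is k-Always Winnable (every labeling λ : V → ZMod k is k-winnable by a finite sequence of vertex toggles) if and only if the neighborhood matrix N of D is invertible over ZMod k. -/

import Mathlib

open scoped Classical

/-- Toggling vertex `u` adds 1 to the label of `u` and of every vertex that `u` dominates. -/
noncomputable def toggle {V : Type*} (adj : V → V → Prop) {k : ℕ}
    (lam : V → ZMod k) (u : V) : V → ZMod k :=
  fun w => lam w + if w = u ∨ adj u w then 1 else 0

/-- The neighborhood matrix of a digraph over `ZMod k`. -/
noncomputable def neighborhoodMatrix {V : Type*} (adj : V → V → Prop) (k : ℕ) :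
    Matrix V V (ZMod k) :=
  Matrix.of fun u v => if u = v ∨ adj u v then 1 else 0

lemma foldl_toggle_eq {V : Type*} (adj : V → V → Prop) {k : ℕ}
    (L : List V) (lam : V → ZMod k) :
    L.foldl (toggle adj) lam =
      fun w => lam w + (L.map (fun u => neighborhoodMatrix adj k u w)).sum := by
  induction L generalizing lam with
  | nil => simp
  | cons u L ih =>
    simp only [List.foldl_cons, ih, List.map_cons, List.sum_cons]
    funext w
    simp only [toggle, neighborhoodMatrix, Matrix.of_apply, eq_comm]
    ring

lemma foldl_toggle_eq' {V : Type*} [Fintype V] [DecidableEq V] (adj : V → V → Prop) {k : ℕ}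
    (L : List V) (lam : V → ZMod k) :
    L.foldl (toggle adj) lam =
      lam + Matrix.vecMul (fun v => (L.count v : ZMod k)) (neighborhoodMatrix adj k) := by
  rw [foldl_toggle_eq]
  funext w
  simp only [Pi.add_apply, Matrix.vecMul, dotProduct]
  congr 1
  rw [Finset.sum_list_map_count]
  rw [Finset.sum_subset (Finset.subset_univ L.toFinset)]
  · refine Finset.sum_congr rfl fun v _ => ?_
    rw [nsmul_eq_mul]
  · intro v _ hv
    simp [List.count_eq_zero_of_not_mem (by simpa using hv)]

lemma exists_list_count {V : Type*} [Fintype V] [DecidableEq V] (g : V → ℕ) :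
    ∃ L : List V, ∀ v, L.count v = g v := by
  refine ⟨Finset.univ.toList.flatMap (fun v => List.replicate (g v) v), fun w => ?_⟩
  rw [List.count_flatMap]
  have h1 : (List.count w ∘ fun v => List.replicate (g v) v)
      = fun v => if v = w then g v else 0 := by
    funext v; simp [List.count_replicate]
  rw [h1, Finset.sum_map_toList]
  simp

/-- A digraph is `k`-Always Winnable iff its neighborhood matrix is invertible over `ZMod k`. -/
theorem kAW_iff_neighborhoodMatrix_invertible {V : Type*} [Fintype V] [DecidableEq V]
    (adj : V → V → Prop) (hirr : ∀ v : V, ¬ adj v v) (k : ℕ) (hk : 2 ≤ k) :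
    (∀ lam : V → ZMod k, ∃ L : List V, L.foldl (toggle adj) lam = fun _ => 0) ↔
      IsUnit (neighborhoodMatrix adj k) := by
  haveI : NeZero k := ⟨by omega⟩
  set N := neighborhoodMatrix adj k with hN
  constructor
  · intro h
    -- build a left inverse M with M * N = 1
    have hrow : ∀ i : V, ∃ c : V → ZMod k, Matrix.vecMul c N = Pi.single i 1 := by
      intro i
      obtain ⟨L, hL⟩ := h (-(Pi.single i (1 : ZMod k)))
      refine ⟨fun v => (L.count v : ZMod k), ?_⟩
      have := foldl_toggle_eq' adj L (-(Pi.single i (1 : ZMod k)))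
      rw [hL] at this
      funext w
      have h2 := congrFun this w
      simp only [Pi.add_apply, Pi.neg_apply] at h2
      linear_combination -h2
    choose M hM using hrow
    have hMN : Matrix.of M * N = 1 := by
      ext i j
      have h2 := congrFun (hM i) j
      simp only [Matrix.vecMul, dotProduct, Pi.single_apply] at h2
      rw [Matrix.mul_apply, Matrix.one_apply]
      simp only [Matrix.of_apply]
      rw [h2]
      rcases eq_or_ne i j with h | h <;> simp [h, Ne.symm]
    have : Invertible N := invertibleOfLeftInverse N (Matrix.of M) hMN
    exact isUnit_of_invertible N
  · intro h lam
    obtain ⟨u, hu⟩ := h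
    have hMN : (↑u⁻¹ : Matrix V V (ZMod k)) * N = 1 := by
      rw [← hu]; exact u.inv_mul
    set c : V → ZMod k := Matrix.vecMul (-lam) (↑u⁻¹ : Matrix V V (ZMod k)) with hc
    have hcN : Matrix.vecMul c N = -lam := by
      rw [hc, Matrix.vecMul_vecMul, hMN, Matrix.vecMul_one]
    obtain ⟨L, hL⟩ := exists_list_count (fun v => (c v).val)
    refine ⟨L, ?_⟩
    rw [foldl_toggle_eq']
    have hcc : (fun v => (L.count v : ZMod k)) = c := by
      funext v; rw [hL v, ZMod.natCast_val, ZMod.cast_id]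
    rw [hcc, hcN]
    funext w; simp
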